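/- If T : A^d → F is a semi-diagonal tensor (with d ≥ 2), then the max-flattening rank of T is at least |A|/(d-1). -/

import Mathlib

/-- The `i`-flattening of a tensor `T : A^d → F`: the matrix whose rows are indexed by the
`i`-th coordinate and whose columns are indexed by the remaining coordinates (here represented
redundantly by full tuples; the entry ignores the `i`-th coordinate of the column index, so the
rank is the rank of the flattening matrix in the usual sense). -/
noncomputable def frank {F : Type} [Field F] {A : Type} [Fintype A] [DecidableEq A] {d : ℕ}
    (T : (Fin d → A) → F) (i : Fin d) : ℕ :=
  Matrix.rank (Matrix.of fun (a : A) (v : Fin d → A) => T (Function.update v i a))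

/-- The max-flattening rank. -/
noncomputable def mfrank {F : Type} [Field F] {A : Type} [Fintype A] [DecidableEq A] {d : ℕ}
    (T : (Fin d → A) → F) : ℕ :=
  Finset.univ.sup (fun i : Fin d => frank T i)

/-- `T : A^d → F` is semi-diagonal: nonzero on the diagonal, zero on tuples with pairwise
distinct coordinates. -/
def SemiDiagonal {F : Type} [Field F] {A : Type} {d : ℕ} (T : (Fin d → A) → F) : Prop :=
  (∀ a : A, T (fun _ => a) ≠ 0) ∧ (∀ v : Fin d → A, Function.Injective v → T v = 0)

open Matrix in
lemma myrank_submatrix_le {F : Type} [Field F] {m n m' n' : Type} [Fintype m] [Fintype n]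
    [Fintype m'] [Fintype n'] [DecidableEq m] [DecidableEq n]
    (M : Matrix m n F) (f : m' → m) (g : n' → n) :
    (M.submatrix f g).rank ≤ M.rank := by
  have h : M.submatrix f g =
      (Matrix.of fun i k => if f i = k then (1 : F) else 0) * M *
      (Matrix.of fun k j => if k = g j then (1 : F) else 0) := by
    ext i j
    simp [Matrix.mul_apply, ite_mul, mul_ite, Finset.sum_ite_eq, Finset.sum_ite_eq']
  rw [h]
  exact le_trans (Matrix.rank_mul_le_left _ _) (Matrix.rank_mul_le_right _ _)

lemma exists_row_basis {F A κ : Type} [Field F] [Fintype A] [DecidableEq A] [Fintype κ]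
    (M : Matrix A κ F) :
    ∃ B : Finset A, B.card ≤ M.rank ∧ ∀ a : A, M a ∈ Submodule.span F (M '' ↑B) := by
  cases isEmpty_or_nonempty A with
  | inl h => exact ⟨∅, Nat.zero_le _, fun a => (h.false a).elim⟩
  | inr h =>
    obtain ⟨t, hts, hspan, hli⟩ := exists_linearIndependent F (Set.range M)
    have hfin : t.Finite := hli.setFinite
    haveI : Fintype t := hfin.fintype
    classical
    set pick : (κ → F) → A := fun x => if h : ∃ a, M a = x then h.choose else Classical.arbitrary A
      with hpick
    refine ⟨t.toFinset.image pick, ?_, ?_⟩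
    · calc (t.toFinset.image pick).card ≤ t.toFinset.card := Finset.card_image_le
        _ = Module.finrank F (Submodule.span F t) := (finrank_span_set_eq_card hli).symm
        _ = M.rank := by rw [hspan, Matrix.rank_eq_finrank_span_row]; rfl
    · intro a
      have hsub : t ⊆ M '' ↑(t.toFinset.image pick) := by
        intro x hx
        have hex : ∃ a, M a = x := hts hx
        refine ⟨pick x, ?_, ?_⟩
        · exact Finset.mem_coe.2 (Finset.mem_image.2 ⟨x, Set.mem_toFinset.2 hx, rfl⟩)
        · simp only [hpick, dif_pos hex]; exact hex.choose_spec
      have h1 : M a ∈ Submodule.span F t := by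
        rw [hspan]; exact Submodule.subset_span (Set.mem_range_self a)
      exact Submodule.span_le.2 (le_trans hsub Submodule.subset_span) h1


lemma semiDiagonal_card_le_sum {F : Type} [Field F] :
    ∀ (k : ℕ) (A : Type) [Fintype A] [DecidableEq A] (T : (Fin (k + 2) → A) → F),
      SemiDiagonal T →
      Fintype.card A ≤ ∑ i ∈ Finset.univ.erase (0 : Fin (k + 2)), frank T i := by
  intro k
  induction k with
  | zero =>
    intro A _ _ T hT
    classical
    have herase : (Finset.univ.erase (0 : Fin 2)) = {1} := by decide
    rw [herase, Finset.sum_singleton]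
    set M : Matrix A (Fin 2 → A) F :=
      Matrix.of fun (a : A) (v : Fin 2 → A) => T (Function.update v 1 a) with hM
    have hsub : M.submatrix id (fun b : A => (fun _ => b : Fin 2 → A))
        = Matrix.diagonal (fun a => T (fun _ => a)) := by
      ext a b
      by_cases hab : a = b
      · subst hab
        simp only [Matrix.submatrix_apply, id_eq, Matrix.diagonal_apply_eq, hM, Matrix.of_apply]
        congr 1
        exact funext fun i => by
          by_cases hi : i = 1
          · subst hi; simp
          · rw [Function.update_of_ne hi]
      · rw [Matrix.diagonal_apply_ne _ hab]
        simp only [Matrix.submatrix_apply, id_eq, hM, Matrix.of_apply]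
        apply hT.2
        intro i j hij
        fin_cases i <;> fin_cases j <;> simp_all [Function.update]
    have hrank := Matrix.rank_diagonal (fun a => T (fun _ => a)) (m := A) (R := F)
    have hcard : Fintype.card {i // T (fun _ => i) ≠ 0} = Fintype.card A := by
      apply Fintype.card_congr
      exact Equiv.subtypeUnivEquiv (fun a => hT.1 a)
    calc Fintype.card A = (Matrix.diagonal (fun a => T (fun _ => a))).rank := by
          rw [hrank, hcard]
      _ = (M.submatrix id (fun b : A => (fun _ => b : Fin 2 → A))).rank := by rw [hsub]
      _ ≤ M.rank := by
          have := myrank_submatrix_le M id (fun b : A => (fun _ => b : Fin 2 → A))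
          exact this
      _ = frank T 1 := rfl
  | succ k ih =>
    intro A _ _ T hT
    show Fintype.card A ≤ ∑ i ∈ Finset.univ.erase (0 : Fin (k + 3)), frank T i
    classical
    set lst : Fin (k + 3) := Fin.last (k + 2) with hlst
    set M : Matrix A (Fin (k + 3) → A) F :=
      Matrix.of fun (a : A) (w : Fin (k + 3) → A) => T (Function.update w lst a) with hM
    obtain ⟨B, hBcard, hBspan⟩ := exists_row_basis M
    set T' : (Fin (k + 2) → {a : A // a ∉ B}) → F :=
      fun v => T (Fin.snoc (fun i => (v i : A)) ((v 0 : A))) with hT'def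
    -- semidiagonality of T'
    have hT' : SemiDiagonal T' := by
      constructor
      · intro a
        have hconst : (Fin.snoc (fun _ => (a : A)) ((a : A)) : Fin (k + 3) → A) = fun _ => (a : A) := by
          funext j
          rcases Fin.eq_castSucc_or_eq_last j with ⟨j', rfl⟩ | rfl
          · simp [Fin.snoc_castSucc]
          · simp [Fin.snoc_last]
        show T (Fin.snoc (fun _ => (a : A)) ((a : A))) ≠ 0
        rw [hconst]; exact hT.1 a
      · intro v hv
        set v' : Fin (k + 2) → A := fun i => (v i : A) with hv'
        set c : Fin (k + 3) → A := Fin.snoc v' ((v 0 : A)) with hc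
        have hkey : ∀ x ∈ M '' ↑B, x ∈ LinearMap.ker (LinearMap.proj (R := F) (φ := fun _ : Fin (k+3) → A => F) c) := by
          rintro x ⟨b, hb, rfl⟩
          have hbB : b ∈ B := hb
          simp only [LinearMap.mem_ker, LinearMap.proj_apply]
          show T (Function.update c lst b) = 0
          have hupd : Function.update c lst b = Fin.snoc v' b := by
            funext j
            rcases Fin.eq_castSucc_or_eq_last j with ⟨j', rfl⟩ | rfl
            · rw [hc, hlst, Function.update_of_ne (Fin.ne_of_lt (Fin.castSucc_lt_last j')),
                Fin.snoc_castSucc, Fin.snoc_castSucc]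
            · rw [hc, hlst, Function.update_self, Fin.snoc_last]
          rw [hupd]
          apply hT.2
          intro i j hij
          rcases Fin.eq_castSucc_or_eq_last i with ⟨i', rfl⟩ | rfl <;>
            rcases Fin.eq_castSucc_or_eq_last j with ⟨j', rfl⟩ | rfl
          · rw [Fin.snoc_castSucc, Fin.snoc_castSucc] at hij
            have hii : i' = j' := hv (Subtype.ext hij)
            rw [hii]
          · rw [Fin.snoc_castSucc, Fin.snoc_last] at hij
            have : (v i' : A) ∈ B := by rw [show ((v i' : A)) = b from hij]; exact hbB
            exact absurd this (v i').2
          · rw [Fin.snoc_last, Fin.snoc_castSucc] at hij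
            have : (v j' : A) ∈ B := by rw [show ((v j' : A)) = b from hij.symm]; exact hbB
            exact absurd this (v j').2
          · rfl
        have hker : Submodule.span F (M '' ↑B) ≤
            LinearMap.ker (LinearMap.proj (R := F) (φ := fun _ : Fin (k+3) → A => F) c) :=
          Submodule.span_le.2 hkey
        have h0 : M ((v 0 : A)) c = 0 := hker (hBspan ((v 0 : A)))
        show T (Fin.snoc v' ((v 0 : A))) = 0
        have : T (Function.update c lst ((v 0 : A))) = 0 := h0
        rwa [hc, hlst, Fin.update_snoc_last] at this
    -- frank bounds
    have hfr : ∀ i : Fin (k + 2), i ≠ 0 → frank T' i ≤ frank T i.castSucc := by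
      intro i hi
      set N : Matrix A (Fin (k + 3) → A) F :=
        Matrix.of fun (a : A) (w : Fin (k + 3) → A) => T (Function.update w i.castSucc a) with hN
      set g : (Fin (k + 2) → {a : A // a ∉ B}) → (Fin (k + 3) → A) :=
        fun v => Fin.snoc (fun j => (v j : A)) ((v 0 : A)) with hg
      have heq : (Matrix.of fun (a : {a : A // a ∉ B}) (v : Fin (k + 2) → {a : A // a ∉ B}) => T' (Function.update v i a))
          = N.submatrix (Subtype.val : {a : A // a ∉ B} → A) g := by
        ext a v
        simp only [Matrix.of_apply, Matrix.submatrix_apply, hN, hg]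
        show T (Fin.snoc (fun j => ((Function.update v i a j : {a : A // a ∉ B}): A)) ((Function.update v i a 0 : {a : A // a ∉ B}): A))
          = T (Function.update (Fin.snoc (fun j => (v j : A)) ((v 0 : A))) i.castSucc (a : A))
        have h1 : (Function.update v i a 0 : {a : A // a ∉ B}) = v 0 := Function.update_of_ne (Ne.symm hi) a v
        have h2 : (fun j => ((Function.update v i a j : {a : A // a ∉ B}) : A))
            = Function.update (fun j => (v j : A)) i (a : A) := by
          funext j
          by_cases hj : j = i
          · subst hj; simp
          · rw [Function.update_of_ne hj, Function.update_of_ne hj]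
        rw [h1, h2, Fin.snoc_update]
      show Matrix.rank _ ≤ Matrix.rank _
      rw [heq]
      exact myrank_submatrix_le N _ _
    -- cardinalities
    have hIH := ih {a : A // a ∉ B} T' hT'
    have hcardA2 : Fintype.card {a : A // a ∉ B} = Fintype.card A - B.card := by
      rw [Fintype.card_subtype_compl, Fintype.card_coe]
    have hBle : B.card ≤ Fintype.card A := B.card_le_univ
    have hlstrank : B.card ≤ frank T lst := hBcard
    have hsum1 : ∑ i ∈ Finset.univ.erase (0 : Fin (k + 2)), frank T' i
        ≤ ∑ i ∈ Finset.univ.erase (0 : Fin (k + 2)), frank T i.castSucc := by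
      apply Finset.sum_le_sum
      intro i hi
      exact hfr i (Finset.ne_of_mem_erase hi)
    have hsum2 : ∑ i ∈ Finset.univ.erase (0 : Fin (k + 2)), frank T i.castSucc
        = ∑ j ∈ (Finset.univ.erase (0 : Fin (k + 2))).image Fin.castSucc, frank T j := by
      rw [Finset.sum_image]
      intro x _ y _ h
      exact Fin.castSucc_injective _ h
    have hsub : (Finset.univ.erase (0 : Fin (k + 2))).image Fin.castSucc
        ⊆ ((Finset.univ.erase (0 : Fin (k + 3))).erase lst) := by
      intro j hj
      obtain ⟨i, hi, rfl⟩ := Finset.mem_image.1 hj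
      have hi0 : i ≠ 0 := Finset.ne_of_mem_erase hi
      refine Finset.mem_erase.2 ⟨?_, Finset.mem_erase.2 ⟨?_, Finset.mem_univ _⟩⟩
      · exact Fin.ne_of_lt (Fin.castSucc_lt_last i)
      · intro h
        apply hi0
        apply Fin.castSucc_injective
        rw [h, Fin.castSucc_zero]
    have hsum3 : ∑ j ∈ (Finset.univ.erase (0 : Fin (k + 2))).image Fin.castSucc, frank T j
        ≤ ∑ j ∈ ((Finset.univ.erase (0 : Fin (k + 3))).erase lst), frank T j :=
      Finset.sum_le_sum_of_subset hsub
    have hlstmem : lst ∈ Finset.univ.erase (0 : Fin (k + 3)) := by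
      refine Finset.mem_erase.2 ⟨?_, Finset.mem_univ _⟩
      rw [hlst]
      intro h
      have := congrArg Fin.val h
      simp [Fin.last] at this
    have hfinal := Finset.sum_erase_add (Finset.univ.erase (0 : Fin (k + 3))) (frank T) hlstmem
    omega

/-- If `T : A^d → F` is semi-diagonal (`d ≥ 2`), then `mfrank T ≥ |A| / (d-1)`. -/
theorem mfrank_of_semiDiagonal {F : Type} [Field F] {A : Type} [Fintype A] [DecidableEq A]
    {d : ℕ} (hd : 2 ≤ d) (T : (Fin d → A) → F) (hT : SemiDiagonal T) :
    Fintype.card A ≤ (d - 1) * mfrank T := by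
  obtain ⟨k, rfl⟩ : ∃ k, d = k + 2 := ⟨d - 2, by omega⟩
  have h := semiDiagonal_card_le_sum k A T hT
  have h2 : ∑ i ∈ Finset.univ.erase (0 : Fin (k + 2)), frank T i
      ≤ (Finset.univ.erase (0 : Fin (k + 2))).card • mfrank T := by
    apply Finset.sum_le_card_nsmul
    intro i _
    exact Finset.le_sup (Finset.mem_univ i)
  have h3 : (Finset.univ.erase (0 : Fin (k + 2))).card = k + 1 := by
    rw [Finset.card_erase_of_mem (Finset.mem_univ _), Finset.card_univ, Fintype.card_fin]
    omega
  rw [h3, smul_eq_mul] at h2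
  have : k + 2 - 1 = k + 1 := by omega
  rw [this]
  exact le_trans h h2
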